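/- The hairclip satisfies the graphical curve shortening equation: for all t ∈ ℝ and all y ∈ ℝ, the function u(y,t) = −arsinh(e^{−t}·cos y) satisfies u_t·(1 + u_y²) = u_yy; explicitly, with w = e^{−t}cos y, Q = √(1 + w²), and s = e^{−t}, u_t = w/Q, u_y = s·sin y/Q, 1 + u_y² = (1 + s²)/Q², and u_yy = w(1 + s²)/Q³. -/

import Mathlib

open Real

theorem hairclip_graphical (t y : ℝ) :
    HasDerivAt (fun τ : ℝ => -Real.arsinh (Real.exp (-τ) * Real.cos y))
      ((Real.exp (-t) * Real.cos y) /
        Real.sqrt (1 + (Real.exp (-t) * Real.cos y) ^ 2)) t ∧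
    HasDerivAt (fun η : ℝ => -Real.arsinh (Real.exp (-t) * Real.cos η))
      ((Real.exp (-t) * Real.sin y) /
        Real.sqrt (1 + (Real.exp (-t) * Real.cos y) ^ 2)) y ∧
    1 + ((Real.exp (-t) * Real.sin y) /
          Real.sqrt (1 + (Real.exp (-t) * Real.cos y) ^ 2)) ^ 2 =
      (1 + Real.exp (-t) ^ 2) / Real.sqrt (1 + (Real.exp (-t) * Real.cos y) ^ 2) ^ 2 ∧
    HasDerivAt
      (fun η : ℝ => (Real.exp (-t) * Real.sin η) /
        Real.sqrt (1 + (Real.exp (-t) * Real.cos η) ^ 2))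
      ((Real.exp (-t) * Real.cos y) * (1 + Real.exp (-t) ^ 2) /
        Real.sqrt (1 + (Real.exp (-t) * Real.cos y) ^ 2) ^ 3) y ∧
    ((Real.exp (-t) * Real.cos y) /
        Real.sqrt (1 + (Real.exp (-t) * Real.cos y) ^ 2)) *
      ((1 + Real.exp (-t) ^ 2) / Real.sqrt (1 + (Real.exp (-t) * Real.cos y) ^ 2) ^ 2) =
      (Real.exp (-t) * Real.cos y) * (1 + Real.exp (-t) ^ 2) /
        Real.sqrt (1 + (Real.exp (-t) * Real.cos y) ^ 2) ^ 3 := by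
  set s : ℝ := Real.exp (-t) with hs
  have hspos : 0 < s := Real.exp_pos _
  set w : ℝ := s * Real.cos y with hw
  have hQpos : 0 < Real.sqrt (1 + w ^ 2) := Real.sqrt_pos.2 (by positivity)
  have hQne : Real.sqrt (1 + w ^ 2) ≠ 0 := hQpos.ne'
  have hQsq : Real.sqrt (1 + w ^ 2) ^ 2 = 1 + w ^ 2 := Real.sq_sqrt (by positivity)
  refine ⟨?_, ?_, ?_, ?_, ?_⟩
  · -- time derivative
    have h1 : HasDerivAt (fun τ : ℝ => Real.exp (-τ) * Real.cos y)
        (-(Real.exp (-t)) * Real.cos y) t := by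
      have := ((hasDerivAt_neg t).exp).mul_const (Real.cos y)
      simpa using this
    have h2 := (h1.arsinh).neg
    refine h2.congr_deriv ?_
    symm
    rw [← hs, ← hw]
    simp only [smul_eq_mul]
    field_simp
    exact hw
  · -- space derivative
    have h1 : HasDerivAt (fun η : ℝ => s * Real.cos η) (-(s * Real.sin y)) y := by
      have := (Real.hasDerivAt_cos y).const_mul s
      simpa [mul_comm] using this
    have h2 := (h1.arsinh).neg
    refine h2.congr_deriv ?_
    symm
    rw [← hw]
    simp only [smul_eq_mul]
    field_simp
  · -- algebraic identity for 1 + u_y²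
    rw [hQsq]
    have hsc : Real.sin y ^ 2 + Real.cos y ^ 2 = 1 := Real.sin_sq_add_cos_sq y
    field_simp [hw]
    rw [hQsq]
    linear_combination (1 + w ^ 2) * s ^ 2 * hsc
  · -- second space derivative
    have hf : HasDerivAt (fun η : ℝ => s * Real.sin η) (s * Real.cos y) y :=
      (Real.hasDerivAt_sin y).const_mul s
    have hin : HasDerivAt (fun η : ℝ => 1 + (s * Real.cos η) ^ 2)
        (2 * (s * Real.cos y) * (-(s * Real.sin y))) y := by
      have hc : HasDerivAt (fun η : ℝ => s * Real.cos η) (-(s * Real.sin y)) y := by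
        have := (Real.hasDerivAt_cos y).const_mul s
        simpa [mul_comm] using this
      have := (hc.pow 2).const_add 1
      refine this.congr_deriv ?_
      ring
    have hg : HasDerivAt (fun η : ℝ => Real.sqrt (1 + (s * Real.cos η) ^ 2))
        ((2 * (s * Real.cos y) * (-(s * Real.sin y))) / (2 * Real.sqrt (1 + w ^ 2))) y := by
      exact hin.sqrt (by rw [← hw]; positivity)
    have h := hf.div hg hQne
    refine h.congr_deriv ?_
    symm
    rw [← hw]
    have hsc : Real.sin y ^ 2 + Real.cos y ^ 2 = 1 := Real.sin_sq_add_cos_sq y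
    set Q : ℝ := Real.sqrt (1 + w ^ 2) with hQdef
    clear_value Q
    have hwdef : w = s * Real.cos y := hw
    field_simp
    linear_combination (-w) * hQsq - (w * (w + s * Real.cos y)) * hwdef - (w * s ^ 2) * hsc
  · -- the equation
    rw [div_mul_div_comm]
    ring_nf
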